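/- arXiv:1712.06033 — 2 statements merged into one kernel-verified Lean document; each statement's English description precedes it below -/
import Mathlib

section
/- Let h : Q → P be a contraction morphism of positive opetopes. For every face q of Q, the set-theoretic image under h of the sub-opetope Q[q] generated by q equals the sub-opetope P[h(q)] generated by h(q). -/
open scoped Classical

structure PHg where
  Face : ℕ → Type
  fin : ∀ k, Finite (Face k)
  γ : ∀ k, Face (k+1) → Face k
  δ : ∀ k, Face (k+1) → Face k → Prop
  δ_total : ∀ k a, ∃ x, δ k a x
  δ0_fun : ∀ (a : Face 1) (x y : Face 0), δ 0 a x → δ 0 a y → x = y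
  bounded : ∃ n, ∀ k, n < k → IsEmpty (Face k)

abbrev PHg.FaceS (S : PHg) : Type := Σ k, S.Face k

/-- The codomain operation, viewed on faces of arbitrary dimension
(identity in dimension 0). -/
def gammaS (S : PHg) : S.FaceS → S.FaceS
  | ⟨0, x⟩ => ⟨0, x⟩
  | ⟨k+1, x⟩ => ⟨k, S.γ k x⟩

/-- `x ∈ δ(q)`. -/
def inDelta (S : PHg) (x q : S.FaceS) : Prop :=
  match q with
  | ⟨0, _⟩ => False
  | ⟨k+1, a⟩ => ∃ h : x.1 = k, S.δ k a (h ▸ x.2)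

/-- `x = γ(q)` (for `q` of positive dimension). -/
def inGammaS (S : PHg) (x q : S.FaceS) : Prop := 0 < q.1 ∧ gammaS S q = x

/-- `x ∈ ∂(q) = {γ(q)} ∪ δ(q)`. -/
def inBoundary (S : PHg) (x q : S.FaceS) : Prop := inGammaS S x q ∨ inDelta S x q

def covPlus (S : PHg) (a b : S.FaceS) : Prop :=
  ∃ α, inDelta S a α ∧ gammaS S α = b

/-- The upper order `<⁺`. -/
def ltPlus (S : PHg) : S.FaceS → S.FaceS → Prop := Relation.TransGen (covPlus S)

def lePlus (S : PHg) (a b : S.FaceS) : Prop := a = b ∨ ltPlus S a b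

def perpPlus (S : PHg) (a b : S.FaceS) : Prop := ltPlus S a b ∨ ltPlus S b a

def covMinus (S : PHg) (a b : S.FaceS) : Prop := 0 < a.1 ∧ inDelta S (gammaS S a) b

/-- The lower order `<⁻`. -/
def ltMinus (S : PHg) : S.FaceS → S.FaceS → Prop := Relation.TransGen (covMinus S)

def perpMinus (S : PHg) (a b : S.FaceS) : Prop := ltMinus S a b ∨ ltMinus S b a

/-- Iterated codomain `γ^{(k)}`. -/
def gammaIter (S : PHg) (k : ℕ) (p : S.FaceS) : S.FaceS := (gammaS S)^[p.1 - k] p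

/-- `X` is a `<⁺`-interval. -/
def IntervalPlus (S : PHg) (X : Set S.FaceS) : Prop :=
  X = ∅ ∨ ∃ x0 x1, lePlus S x0 x1 ∧ X = {x | lePlus S x0 x ∧ lePlus S x x1}

def hasDim (S : PHg) (n : ℕ) : Prop :=
  Nonempty (S.Face n) ∧ ∀ k, n < k → IsEmpty (S.Face k)

/-- A positive opetope: a nonempty positive hypergraph satisfying globularity,
strictness, disjointness, pencil linearity, and having at most one face outside
`δ(S_{k+1})` in each dimension. -/
structure IsOpetope (S : PHg) : Prop where
  ne : Nonempty (S.Face 0)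
  glob_gamma : ∀ a : S.FaceS, 2 ≤ a.1 →
    ({gammaS S (gammaS S a)} : Set S.FaceS) =
      {x | ∃ y, inDelta S y a ∧ gammaS S y = x} \ {x | ∃ y, inDelta S y a ∧ inDelta S x y}
  glob_delta : ∀ a : S.FaceS, 2 ≤ a.1 →
    {x | inDelta S x (gammaS S a)} =
      {x | ∃ y, inDelta S y a ∧ inDelta S x y} \ {x | ∃ y, inDelta S y a ∧ gammaS S y = x}
  strict : ∀ a, ¬ ltPlus S a a
  linear0 : ∀ a b : S.FaceS, a.1 = 0 → b.1 = 0 → a = b ∨ perpPlus S a b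
  disj : ∀ a b : S.FaceS, 0 < a.1 → ¬ (perpMinus S a b ∧ perpPlus S a b)
  pencil_gamma : ∀ x a b, inGammaS S x a → inGammaS S x b → a = b ∨ perpPlus S a b
  pencil_delta : ∀ x a b, inDelta S x a → inDelta S x b → a = b ∨ perpPlus S a b
  size_le_one : ∀ k (a b : S.Face k),
    (¬ ∃ α : S.Face (k+1), S.δ k α a) → (¬ ∃ α : S.Face (k+1), S.δ k α b) → a = b
/-- A contraction morphism (`ι`-map) of positive opetopes. -/
structure IotaMap (Q P : PHg) where
  f : Q.FaceS → P.FaceS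
  dim_le : ∀ q, (f q).1 ≤ q.1
  gamma_pres : ∀ (k : ℕ) (q : Q.FaceS), f (gammaIter Q k q) = gammaIter P k (f q)
  dom_eq : ∀ q : Q.FaceS, 0 < q.1 → (f q).1 = q.1 →
      (∀ x, inDelta Q x q → (f x).1 = x.1 → inDelta P (f x) (f q)) ∧
      (∀ x y, inDelta Q x q → (f x).1 = x.1 → inDelta Q y q → (f y).1 = y.1 →
        f x = f y → x = y) ∧
      (∀ z, inDelta P z (f q) → ∃ x, inDelta Q x q ∧ (f x).1 = x.1 ∧ f x = z)
  dom_one : ∀ q : Q.FaceS, (f q).1 + 1 = q.1 →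
      (∀ x, inDelta Q x q → (f x).1 = x.1 → f x = f q) ∧
      (∃! x, inDelta Q x q ∧ (f x).1 = x.1)
  dom_more : ∀ q : Q.FaceS, (f q).1 + 2 ≤ q.1 → ∀ x, inDelta Q x q → (f x).1 < x.1

/-- The least sub-hypergraph of `S` containing the face `q`
(closed under `γ` and `δ`), i.e. `S[q]`. -/
inductive InGen (S : PHg) (q : S.FaceS) : S.FaceS → Prop
  | base : InGen S q q
  | gam {x : S.FaceS} : InGen S q x → 0 < x.1 → InGen S q (gammaS S x)
  | del {x y : S.FaceS} : InGen S q x → inDelta S y x → InGen S q y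

section MyAux

variable {S : PHg}

lemma gammaS_dim (x : S.FaceS) : (gammaS S x).1 = x.1 - 1 := by
  rcases x with ⟨(_ | k), a⟩ <;> rfl

lemma iterate_gammaS_dim (x : S.FaceS) (m : ℕ) (hm : m ≤ x.1) :
    ((gammaS S)^[m] x).1 = x.1 - m := by
  induction m with
  | zero => simp
  | succ m ih =>
      rw [Function.iterate_succ_apply', gammaS_dim, ih (by omega)]
      omega

lemma gammaIter_dim (k : ℕ) (x : S.FaceS) (h : k ≤ x.1) : (gammaIter S k x).1 = k := by
  unfold gammaIter
  rw [iterate_gammaS_dim x _ (by omega)]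
  omega

lemma gammaIter_eq_iterate (k : ℕ) (x : S.FaceS) (j : ℕ) (h : j ≤ x.1)
    (hk : k = x.1 - j) : gammaIter S k x = (gammaS S)^[j] x := by
  unfold gammaIter; congr 1; omega

lemma inDelta_dim {y x : S.FaceS} (h : inDelta S y x) : y.1 + 1 = x.1 := by
  rcases x with ⟨(_ | k), a⟩
  · exact h.elim
  · obtain ⟨hd, -⟩ := h
    simp [hd]

lemma InGen.gamma' {s x : S.FaceS} (h : InGen S s x) : InGen S s (gammaS S x) := by
  rcases x with ⟨(_ | k), a⟩
  · exact h
  · exact h.gam (Nat.succ_pos _)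

lemma InGen.iter {s x : S.FaceS} (h : InGen S s x) (m : ℕ) :
    InGen S s ((gammaS S)^[m] x) := by
  induction m with
  | zero => exact h
  | succ m ih => rw [Function.iterate_succ_apply']; exact ih.gamma'

lemma InGen.gammaIter' {s x : S.FaceS} (h : InGen S s x) (k : ℕ) :
    InGen S s (gammaIter S k x) := h.iter _

lemma covMinus_gamma {a b : S.FaceS} (h : covMinus S a b) :
    covPlus S (gammaS S a) (gammaS S b) := ⟨b, h.2, rfl⟩

lemma ltMinus_irrefl (hS : IsOpetope S) (a : S.FaceS) : ¬ ltMinus S a a := fun h =>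
  hS.strict _ (Relation.TransGen.lift (gammaS S) (fun _ _ => covMinus_gamma) _ _ h)

lemma PHg.finiteFaceS (S : PHg) : Finite S.FaceS := by
  obtain ⟨n, hn⟩ := S.bounded
  have hf : ∀ x : S.FaceS, x.1 < n + 1 := by
    intro x
    by_contra hx
    exact (hn x.1 (by omega)).false x.2
  haveI : ∀ k : Fin (n + 1), Finite (S.Face k) := fun k => S.fin k
  apply Finite.of_injective (fun x : S.FaceS => (⟨⟨x.1, hf x⟩, x.2⟩ : Σ k : Fin (n + 1), S.Face k))
  rintro ⟨k, a⟩ ⟨l, b⟩ hab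
  obtain ⟨h1, h2⟩ := Sigma.ext_iff.mp hab
  have hkl : k = l := congrArg Fin.val h1
  subst hkl
  exact Sigma.ext rfl (by simpa using h2)

lemma wf_covMinus_conv (hS : IsOpetope S) :
    WellFounded (fun a b : S.FaceS => covMinus S b a) := by
  haveI := S.finiteFaceS
  haveI : IsTrans S.FaceS (fun a b : S.FaceS => ltMinus S b a) :=
    ⟨fun _ _ _ h1 h2 => Relation.TransGen.trans h2 h1⟩
  haveI : IsIrrefl S.FaceS (fun a b : S.FaceS => ltMinus S b a) :=
    ⟨fun a h => ltMinus_irrefl hS a h⟩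
  have hwf : WellFounded (fun a b : S.FaceS => ltMinus S b a) :=
    Finite.wellFounded_of_trans_of_irrefl _
  exact Subrelation.wf (fun {a b} hab => Relation.TransGen.single hab) hwf

end MyAux

lemma drop_collapse {Q P : PHg} (h : IotaMap Q P) {y : Q.FaceS}
    (hy : (h.f y).1 < y.1) : h.f (gammaS Q y) = h.f y := by
  have h1 := h.gamma_pres (y.1 - 1) y
  have e1 : gammaIter Q (y.1 - 1) y = gammaS Q y := by
    rw [gammaIter_eq_iterate (y.1 - 1) y 1 (by omega) (by omega), Function.iterate_one]
  have e2 : gammaIter P (y.1 - 1) (h.f y) = h.f y := by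
    unfold gammaIter
    have e : (h.f y).1 - (y.1 - 1) = 0 := by omega
    rw [e, Function.iterate_zero_apply]
  rw [e1, e2] at h1
  exact h1

lemma main_claim (Q P : PHg) (hQ : IsOpetope Q) (h : IotaMap Q P) (q : Q.FaceS) :
    ∀ n (x y : Q.FaceS), x.1 ≤ n → InGen P (h.f q) (h.f x) → inDelta Q y x →
      InGen P (h.f q) (h.f y) := by
  intro n
  induction n using Nat.strong_induction_on with
  | _ n IH =>
    intro x y hxn hfx hyx
    induction y using (wf_covMinus_conv hQ).induction with
    | _ y IHy =>
      have hy1 : y.1 + 1 = x.1 := inDelta_dim hyx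
      by_cases hyd : (h.f y).1 = y.1
      · -- y's dimension is preserved
        have hxle : (h.f x).1 ≤ x.1 := h.dim_le x
        rcases Nat.lt_or_ge (h.f x).1 x.1 with hlt | hge
        · rcases Nat.lt_or_ge ((h.f x).1 + 1) x.1 with h2 | h2
          · exact absurd hyd (Nat.ne_of_lt (h.dom_more x (by omega) y hyx))
          · have heq : (h.f x).1 + 1 = x.1 := by omega
            rw [(h.dom_one x heq).1 y hyx hyd]
            exact hfx
        · have hxeq : (h.f x).1 = x.1 := le_antisymm hxle hge
          exact hfx.del ((h.dom_eq x (by omega) hxeq).1 y hyx hyd)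
      · -- y's dimension drops
        have hylt : (h.f y).1 < y.1 := lt_of_le_of_ne (h.dim_le y) hyd
        have hy1pos : 0 < y.1 := by omega
        have hx2 : 2 ≤ x.1 := by omega
        have hfy : h.f (gammaS Q y) = h.f y := drop_collapse h hylt
        by_cases hw : ∃ w, inDelta Q w x ∧ inDelta Q (gammaS Q y) w
        · obtain ⟨w, hwx, hgw⟩ := hw
          have hfw : InGen P (h.f q) (h.f w) := IHy w ⟨hy1pos, hgw⟩ hwx
          have hw1 : w.1 + 1 = x.1 := inDelta_dim hwx
          have hres := IH (n - 1) (by omega) w (gammaS Q y) (by omega) hfw hgw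
          rw [hfy] at hres
          exact hres
        · have hglob := hQ.glob_gamma x hx2
          have hmem : gammaS Q y ∈
              ({z | ∃ w, inDelta Q w x ∧ gammaS Q w = z} \
               {z | ∃ w, inDelta Q w x ∧ inDelta Q z w} : Set Q.FaceS) :=
            ⟨⟨y, hyx, rfl⟩, fun ⟨w, hwx, hgw⟩ => hw ⟨w, hwx, hgw⟩⟩
          rw [← hglob] at hmem
          have hgg : gammaS Q y = gammaS Q (gammaS Q x) := hmem
          have e3 : gammaS Q (gammaS Q x) = gammaIter Q (x.1 - 2) x := by
            rw [gammaIter_eq_iterate (x.1 - 2) x 2 (by omega) rfl]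
            rw [show (2 : ℕ) = 1 + 1 from rfl, Function.iterate_succ_apply',
              Function.iterate_one]
          rw [← hfy, hgg, e3, h.gamma_pres]
          exact hfx.gammaIter' _

lemma iota_forward (Q P : PHg) (hQ : IsOpetope Q) (h : IotaMap Q P) (q : Q.FaceS) :
    ∀ x, InGen Q q x → InGen P (h.f q) (h.f x) := by
  intro x hx
  induction hx with
  | base => exact InGen.base
  | @gam x hx hpos ih =>
      have e1 : gammaS Q x = gammaIter Q (x.1 - 1) x := by
        rw [gammaIter_eq_iterate (x.1 - 1) x 1 (by omega) (by omega),
          Function.iterate_one]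
      rw [e1, h.gamma_pres]
      exact ih.gammaIter' _
  | @del x y hx hyx ih => exact main_claim Q P hQ h q x.1 x y le_rfl ih hyx

/-- For a contraction morphism `h : Q → P` and any face `q` of `Q`,
the image of `Q[q]` under `h` is exactly `P[h(q)]`. -/
theorem iota_image_of_generated
    (Q P : PHg) (hQ : IsOpetope Q) (hP : IsOpetope P) (h : IotaMap Q P)
    (q : Q.FaceS) :
    ∀ y : P.FaceS, (∃ x, InGen Q q x ∧ h.f x = y) ↔ InGen P (h.f q) y := by
  intro y
  constructor
  · rintro ⟨x, hx, rfl⟩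
    exact iota_forward Q P hQ h q x hx
  · intro hy
    induction hy with
    | base => exact ⟨q, InGen.base, rfl⟩
    | @gam z hz hpos ih =>
        obtain ⟨x, hx, rfl⟩ := ih
        refine ⟨gammaIter Q ((h.f x).1 - 1) x, hx.gammaIter' _, ?_⟩
        rw [h.gamma_pres,
          gammaIter_eq_iterate ((h.f x).1 - 1) (h.f x) 1 (by omega) (by omega),
          Function.iterate_one]
    | @del z w hz hwz ih =>
        obtain ⟨x, hx, rfl⟩ := ih
        have hk : (h.f x).1 ≤ x.1 := h.dim_le x
        have hfx2 : h.f (gammaIter Q (h.f x).1 x) = h.f x := by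
          rw [h.gamma_pres]
          unfold gammaIter
          rw [show (h.f x).1 - (h.f x).1 = 0 by omega, Function.iterate_zero_apply]
        have hd2 : (gammaIter Q (h.f x).1 x).1 = (h.f x).1 := gammaIter_dim _ x hk
        have hpos : 0 < (h.f x).1 := by
          have := inDelta_dim hwz; omega
        obtain ⟨v, hvx2, hvdim, hfv⟩ :=
          (h.dom_eq (gammaIter Q (h.f x).1 x) (by omega) (by rw [hfx2, hd2])).2.2
            w (by rw [hfx2]; exact hwz)
        exact ⟨v, (hx.gammaIter' (h.f x).1).del hvx2, hfv⟩
end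

section
/- Let P be a positive opetope of dimension n with top face x_n = m_P. The γ-flag [x_n, γ(x_n), γ^{(n-2)}(x_n), …, γ^{(0)}(x_n)] is the least element of Flags_P[x_n / 0) in the flag order, and the δ-flag [x_n, γ(x_n), …, γ^{(1)}(x_n), δγ^{(1)}(x_n)] is the greatest element. -/
open scoped Classical

/-- A restricted flag from dimension `m` down to dimension `l`,
encoded as a function `ℕ → S.FaceS` (entries outside `[l,m]` are irrelevant). -/
def IsRFlag (S : PHg) (m l : ℕ) (F : ℕ → S.FaceS) : Prop :=
  (∀ i, l ≤ i → i ≤ m → (F i).1 = i) ∧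
  (∀ i, l ≤ i → i < m → inBoundary S (F i) (F (i+1)))

/-- The pencil order `≺ₓ` on the pencil over `x`. -/
def pencilLt (S : PHg) (x a b : S.FaceS) : Prop :=
  (inGammaS S x b ∧ inDelta S x a) ∨
  (inDelta S x a ∧ inDelta S x b ∧ ltPlus S a b) ∨
  (inGammaS S x a ∧ inGammaS S x b ∧ ltPlus S b a)

/-- The sign of the flag segment `[F j, …, F l]`. -/
noncomputable def sgnSeg (S : PHg) (l : ℕ) (F : ℕ → S.FaceS) : ℕ → ℤ
  | 0 => 1
  | j+1 => if l ≤ j ∧ inDelta S (F j) (F (j+1)) then -(sgnSeg S l F j) else sgnSeg S l F j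

/-- The flag order `◁` on flags from dimension `m` down to `l`. -/
def flagLt (S : PHg) (l m : ℕ) (F G : ℕ → S.FaceS) : Prop :=
  ∃ k, l ≤ k ∧ k ≤ m ∧ (∀ i, l ≤ i → i < k → F i = G i) ∧ F k ≠ G k ∧
    ((k = 0 ∧ ltPlus S (G 0) (F 0)) ∨
     (0 < k ∧ sgnSeg S l F (k-1) = 1 ∧ pencilLt S (F (k-1)) (F k) (G k)) ∨
     (0 < k ∧ sgnSeg S l F (k-1) = -1 ∧ pencilLt S (F (k-1)) (G k) (F k)))

/-- `i` is the low level `ll` of the flag `F` (with top dimension `n`). -/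
def LowLevelT (S : PHg) (n : ℕ) (F : ℕ → S.FaceS) (i : ℕ) : Prop :=
  i + 2 ≤ n ∧ inDelta S (F (i+1)) (F (i+2)) ∧
    ∀ j, i < j → j + 2 ≤ n → ¬ inDelta S (F (j+1)) (F (j+2))

/-- Membership in `Flags[t / b]`, flags from top face `t` (dim `m`) to bottom face `b` (dim `l`). -/
def MemFlags (S : PHg) (l m : ℕ) (t b : S.FaceS) (F : ℕ → S.FaceS) : Prop :=
  IsRFlag S m l F ∧ F m = t ∧ F l = b

def EqOnFl {α : Type*} (l m : ℕ) (F G : ℕ → α) : Prop :=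
  ∀ i, l ≤ i → i ≤ m → F i = G i

/-- `G` is the successor of `F` in `Flags[t / b]` with respect to the flag order. -/
def SuccFl (S : PHg) (l m : ℕ) (t b : S.FaceS) (F G : ℕ → S.FaceS) : Prop :=
  MemFlags S l m t b F ∧ MemFlags S l m t b G ∧ flagLt S l m F G ∧
  ∀ H, MemFlags S l m t b H → flagLt S l m F H → (EqOnFl l m G H ∨ flagLt S l m G H)

/-! ### Auxiliary lemmas -/

lemma gammaS_fst (S : PHg) (q : S.FaceS) : (gammaS S q).1 = q.1 - 1 := by
  obtain ⟨k, a⟩ := q; cases k <;> rfl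

lemma iter_fst (S : PHg) (m : ℕ) (p : S.FaceS) :
    ((gammaS S)^[m] p).1 = p.1 - m := by
  induction m with
  | zero => simp
  | succ m ih => rw [Function.iterate_succ_apply', gammaS_fst, ih]; omega

lemma inDelta_fst (S : PHg) {x q : S.FaceS} (h : inDelta S x q) : x.1 + 1 = q.1 := by
  obtain ⟨k, a⟩ := q
  cases k with
  | zero => exact h.elim
  | succ k => obtain ⟨h1, -⟩ := h; simp [h1]

lemma inDelta_mk (S : PHg) (k : ℕ) (a : S.Face (k+1)) (x : S.Face k) (h : S.δ k a x) :
    inDelta S ⟨k, x⟩ ⟨k+1, a⟩ := ⟨rfl, h⟩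

lemma inDelta_mk' (S : PHg) (k : ℕ) (a : S.Face (k+1)) (x : S.Face k)
    (h : inDelta S ⟨k, x⟩ ⟨k+1, a⟩) : S.δ k a x := by
  obtain ⟨h1, h2⟩ := h; exact h2

lemma not_inDelta_gammaS {S : PHg} (hS : IsOpetope S) (q : S.FaceS) :
    ¬ inDelta S (gammaS S q) q := fun h =>
  hS.strict (gammaS S q) (Relation.TransGen.single ⟨q, h, rfl⟩)

lemma covPlus_fst (S : PHg) {a b : S.FaceS} (h : covPlus S a b) : a.1 = b.1 := by
  obtain ⟨α, h1, h2⟩ := h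
  have h3 := inDelta_fst S h1
  have h4 := gammaS_fst S α
  rw [h2] at h4
  omega

lemma ltPlus_fst (S : PHg) {a b : S.FaceS} (h : ltPlus S a b) : a.1 = b.1 := by
  induction h with
  | single h => exact covPlus_fst S h
  | tail h1 h2 ih => exact ih.trans (covPlus_fst S h2)

lemma aboveInduction {S : PHg} (hS : IsOpetope S) (k : ℕ) (P : S.Face k → Prop)
    (step : ∀ w, (∀ v, ltPlus S ⟨k, w⟩ ⟨k, v⟩ → P v) → P w) : ∀ w, P w := by
  haveI := S.fin k
  let r : S.Face k → S.Face k → Prop := fun a b => ltPlus S ⟨k, b⟩ ⟨k, a⟩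
  haveI : IsTrans (S.Face k) r := ⟨fun a b c h1 h2 => Relation.TransGen.trans h2 h1⟩
  haveI : IsIrrefl (S.Face k) r := ⟨fun a h => hS.strict _ h⟩
  intro w
  exact (Finite.wellFounded_of_trans_of_irrefl r).induction w
    (fun a ih => step a (fun v hv => ih v hv))

lemma eq_of_no_delta {S : PHg} (hS : IsOpetope S) (w v : S.FaceS)
    (hdim : w.1 = v.1)
    (h1 : ∀ q, ¬ inDelta S w q) (h2 : ∀ q, ¬ inDelta S v q) : w = v := by
  obtain ⟨wk, w2⟩ := w
  obtain ⟨vk, v2⟩ := v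
  simp only at hdim
  subst hdim
  exact congrArg (Sigma.mk wk)
    (hS.size_le_one wk w2 v2
      (fun ⟨α, hα⟩ => h1 ⟨wk+1, α⟩ (inDelta_mk S wk α w2 hα))
      (fun ⟨α, hα⟩ => h2 ⟨wk+1, α⟩ (inDelta_mk S wk α v2 hα)))

lemma dim_G {S : PHg} {n : ℕ} (t : S.FaceS) (ht : t.1 = n) {k : ℕ} (hk : k ≤ n) :
    (gammaIter S k t).1 = k := by
  have h : (gammaIter S k t).1 = t.1 - (t.1 - k) := iter_fst S (t.1 - k) t
  omega

lemma G_ge {S : PHg} {n : ℕ} (t : S.FaceS) (ht : t.1 = n) {k : ℕ} (hk : n ≤ k) :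
    gammaIter S k t = t := by
  have h : t.1 - k = 0 := by omega
  rw [gammaIter, h]
  rfl

lemma G_succ {S : PHg} {n : ℕ} (t : S.FaceS) (ht : t.1 = n) {k : ℕ} (hk : k < n) :
    gammaIter S k t = gammaS S (gammaIter S (k+1) t) := by
  rw [gammaIter, gammaIter]
  have h : t.1 - k = (t.1 - (k+1)) + 1 := by omega
  rw [h, Function.iterate_succ_apply']

lemma topFace_unique {S : PHg} (hS : IsOpetope S) {n : ℕ} (hn : hasDim S n)
    (t : S.FaceS) (ht : t.1 = n) (w : S.FaceS) (hw : w.1 = n) : w = t := by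
  refine eq_of_no_delta hS w t (by omega) ?_ ?_ <;>
  · intro q hq
    obtain ⟨qk, q2⟩ := q
    have h2 : _ + 1 = qk := inDelta_fst S hq
    exact (hn.2 qk (by omega)).false q2

lemma lemT {S : PHg} (hS : IsOpetope S) {n : ℕ} (hn : hasDim S n)
    (t : S.FaceS) (ht : t.1 = n) :
    ∀ d k, k + d = n → ∀ w : S.FaceS, w.1 = k → lePlus S w (gammaIter S k t) := by
  intro d
  induction d with
  | zero =>
    intro k hk w hw
    left
    rw [G_ge t ht (by omega)]
    exact topFace_unique hS hn t ht w (by omega)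
  | succ d ih =>
    intro k hk w hw
    have hkn : k < n := by omega
    have hA : ∀ q, ¬ inDelta S (gammaIter S k t) q := by
      intro q hq
      have hdq : q.1 = k + 1 := by
        have h1 := inDelta_fst S hq
        rw [dim_G t ht hkn.le] at h1; omega
      have hle := ih (k+1) (by omega) q hdq
      have hcm : covMinus S (gammaIter S (k+1) t) q := by
        refine ⟨?_, ?_⟩
        · rw [dim_G t ht (by omega : k + 1 ≤ n)]; omega
        · rw [← G_succ t ht hkn]; exact hq
      rcases hle with he | hlt
      · rw [he, G_succ t ht hkn] at hq
        exact not_inDelta_gammaS hS _ hq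
      · exact hS.disj (gammaIter S (k+1) t) q
          (by rw [dim_G t ht (by omega : k + 1 ≤ n)]; omega)
          ⟨Or.inl (Relation.TransGen.single hcm), Or.inr hlt⟩
    obtain ⟨wk, w2⟩ := w
    simp only at hw
    subst hw
    refine aboveInduction hS wk (fun w2 => lePlus S ⟨wk, w2⟩ (gammaIter S wk t)) ?_ w2
    intro a ihw
    by_cases hβ : ∃ α : S.Face (wk+1), S.δ wk α a
    · obtain ⟨α, hα⟩ := hβ
      have hcov : covPlus S ⟨wk, a⟩ ⟨wk, S.γ wk α⟩ :=
        ⟨⟨wk+1, α⟩, inDelta_mk S wk α a hα, rfl⟩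
      rcases ihw (S.γ wk α) (Relation.TransGen.single hcov) with he | hlt
      · right; rw [← he]; exact Relation.TransGen.single hcov
      · right; exact Relation.TransGen.head hcov hlt
    · left
      refine eq_of_no_delta hS ⟨wk, a⟩ (gammaIter S wk t)
        (by rw [dim_G t ht hkn.le]) ?_ hA
      intro q hq
      obtain ⟨qk, q2⟩ := q
      have hd : wk + 1 = qk := inDelta_fst S hq
      subst hd
      exact hβ ⟨q2, inDelta_mk' S wk q2 a hq⟩

lemma lemTk {S : PHg} (hS : IsOpetope S) {n : ℕ} (hn : hasDim S n)
    (t : S.FaceS) (ht : t.1 = n) (k : ℕ) (hk : k ≤ n) (w : S.FaceS) (hw : w.1 = k) :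
    lePlus S w (gammaIter S k t) :=
  lemT hS hn t ht (n - k) k (by omega) w hw

lemma lemA {S : PHg} (hS : IsOpetope S) {n : ℕ} (hn : hasDim S n)
    (t : S.FaceS) (ht : t.1 = n) :
    ∀ k q, ¬ inDelta S (gammaIter S k t) q := by
  intro k q hq
  rcases le_or_gt n k with h | h
  · rw [G_ge t ht h] at hq
    obtain ⟨qk, q2⟩ := q
    have h2 : t.1 + 1 = qk := inDelta_fst S hq
    exact (hn.2 qk (by omega)).false q2
  · have hdq : q.1 = k + 1 := by
      have h1 := inDelta_fst S hq
      rw [dim_G t ht h.le] at h1; omega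
    have hle := lemTk hS hn t ht (k+1) (by omega) q hdq
    have hcm : covMinus S (gammaIter S (k+1) t) q := by
      refine ⟨?_, ?_⟩
      · rw [dim_G t ht (by omega : k + 1 ≤ n)]; omega
      · rw [← G_succ t ht h]; exact hq
    rcases hle with he | hlt
    · rw [he, G_succ t ht h] at hq
      exact not_inDelta_gammaS hS _ hq
    · exact hS.disj (gammaIter S (k+1) t) q
        (by rw [dim_G t ht (by omega : k + 1 ≤ n)]; omega)
        ⟨Or.inl (Relation.TransGen.single hcm), Or.inr hlt⟩

lemma not_inDelta_G_succ {S : PHg} (hS : IsOpetope S) {n : ℕ}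
    (t : S.FaceS) (ht : t.1 = n) (j : ℕ) :
    ¬ inDelta S (gammaIter S j t) (gammaIter S (j+1) t) := by
  intro h
  rcases lt_or_ge j n with hj | hj
  · rw [G_succ t ht hj] at h
    exact not_inDelta_gammaS hS _ h
  · rw [G_ge t ht hj, G_ge t ht (by omega)] at h
    have := inDelta_fst S h
    omega

lemma sgn_G {S : PHg} (hS : IsOpetope S) {n : ℕ}
    (t : S.FaceS) (ht : t.1 = n) (j : ℕ) :
    sgnSeg S 0 (fun i => gammaIter S i t) j = 1 := by
  induction j with
  | zero => rfl
  | succ j ih =>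
    rw [sgnSeg, if_neg, ih]
    rintro ⟨-, h⟩
    exact not_inDelta_G_succ hS t ht j h

lemma dim_t0 {S : PHg} {n : ℕ} (t : S.FaceS) (ht : t.1 = n)
    (t0 : S.FaceS) (ht0 : inDelta S t0 (gammaIter S 1 t)) :
    1 ≤ n ∧ t0.1 = 0 := by
  have h1 : t0.1 + 1 = (gammaIter S 1 t).1 := inDelta_fst S ht0
  have h2 : (gammaIter S 1 t).1 = t.1 - (t.1 - 1) := iter_fst S (t.1 - 1) t
  omega

lemma lemA0 {S : PHg} (hS : IsOpetope S) {n : ℕ} (hn : hasDim S n)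
    (t : S.FaceS) (ht : t.1 = n)
    (t0 : S.FaceS) (ht0 : inDelta S t0 (gammaIter S 1 t)) :
    ∀ q : S.FaceS, q.1 = 1 → gammaS S q ≠ t0 := by
  have hn1 : 1 ≤ n := (dim_t0 t ht t0 ht0).1
  intro q hq hγ
  have hcm : covMinus S q (gammaIter S 1 t) := ⟨by omega, by rw [hγ]; exact ht0⟩
  rcases lemTk hS hn t ht 1 hn1 q hq with he | hlt
  · rw [he] at hγ
    rw [← hγ] at ht0
    exact not_inDelta_gammaS hS _ ht0
  · exact hS.disj q (gammaIter S 1 t) (by omega)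
      ⟨Or.inl (Relation.TransGen.single hcm), Or.inl hlt⟩

lemma lemT0 {S : PHg} (hS : IsOpetope S) {n : ℕ} (hn : hasDim S n)
    (t : S.FaceS) (ht : t.1 = n)
    (t0 : S.FaceS) (ht0 : inDelta S t0 (gammaIter S 1 t)) :
    ∀ v : S.FaceS, v.1 = 0 → lePlus S t0 v := by
  have h0 : t0.1 = 0 := (dim_t0 t ht t0 ht0).2
  intro v hv
  rcases hS.linear0 v t0 hv h0 with he | hp
  · left; exact he.symm
  · rcases hp with hlt | hlt
    · exfalso
      have hlast : ∃ b : S.FaceS, b.1 = 0 ∧ covPlus S b t0 := by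
        cases hlt with
        | single h => exact ⟨v, hv, h⟩
        | tail h1 h2 =>
          rename_i b
          exact ⟨b, by have := ltPlus_fst S h1; omega, h2⟩
      obtain ⟨b, hb, α, hδ, hγ⟩ := hlast
      exact lemA0 hS hn t ht t0 ht0 α
        (by have := inDelta_fst S hδ; omega) hγ
    · right; exact hlt
/-- In `Flags_P[x_n / 0)`, the `γ`-flag
`[x_n, γ(x_n), …, γ^{(0)}(x_n)]` is the least element and the `δ`-flag
`[x_n, γ(x_n), …, γ^{(1)}(x_n), δγ^{(1)}(x_n)]` is the greatest element. -/

theorem initial_and_terminal_flags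
    (S : PHg) (hS : IsOpetope S) (n : ℕ) (hn : hasDim S n)
    (t : S.FaceS) (ht : t.1 = n)
    (t0 : S.FaceS) (ht0 : inDelta S t0 (gammaIter S 1 t)) :
    IsRFlag S n 0 (fun j => gammaIter S j t) ∧
    IsRFlag S n 0 (fun j => if j = 0 then t0 else gammaIter S j t) ∧
    (∀ F, IsRFlag S n 0 F → F n = t →
      EqOnFl 0 n F (fun j => gammaIter S j t) ∨
        flagLt S 0 n (fun j => gammaIter S j t) F) ∧
    (∀ F, IsRFlag S n 0 F → F n = t →
      EqOnFl 0 n F (fun j => if j = 0 then t0 else gammaIter S j t) ∨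
        flagLt S 0 n F (fun j => if j = 0 then t0 else gammaIter S j t)) := by
  classical
  obtain ⟨hn1, h00⟩ := dim_t0 t ht t0 ht0
  refine ⟨⟨?_, ?_⟩, ⟨?_, ?_⟩, ?_, ?_⟩
  -- Part 1a: dimensions of the γ-flag
  · intro i _ hi
    exact dim_G t ht hi
  -- Part 1b: boundary condition of the γ-flag
  · intro i _ hi
    exact Or.inl ⟨by rw [dim_G t ht (by omega : i + 1 ≤ n)]; omega,
      (G_succ t ht hi).symm⟩
  -- Part 2a: dimensions of the δ-flag
  · intro i _ hi
    by_cases h : i = 0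
    · subst h
      simpa using h00
    · simp only [if_neg h]
      exact dim_G t ht hi
  -- Part 2b: boundary condition of the δ-flag
  · intro i _ hi
    by_cases h : i = 0
    · subst h
      simp only [if_pos rfl, if_neg one_ne_zero]
      exact Or.inr ht0
    · simp only [if_neg h, if_neg (by omega : i + 1 ≠ 0)]
      exact Or.inl ⟨by rw [dim_G t ht (by omega : i + 1 ≤ n)]; omega,
        (G_succ t ht hi).symm⟩
  -- Part 3: the γ-flag is least
  · intro F hF hFn
    by_cases hall : ∀ i, i ≤ n → F i = gammaIter S i t
    · exact Or.inl fun i _ hi => hall i hi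
    · right
      push_neg at hall
      obtain ⟨i0, hi0n, hi0⟩ := hall
      have hex : ∃ k, F k ≠ gammaIter S k t ∧ k ≤ n := ⟨i0, hi0, hi0n⟩
      obtain ⟨k, ⟨hkne, hkn⟩, hmin'⟩ :
          ∃ k, (F k ≠ gammaIter S k t ∧ k ≤ n) ∧
            ∀ i, i < k → ¬(F i ≠ gammaIter S i t ∧ i ≤ n) :=
        ⟨Nat.find hex, Nat.find_spec hex, fun i h => Nat.find_min hex h⟩
      have hmin : ∀ i, i < k → F i = gammaIter S i t := by
        intro i hik
        by_contra hne
        exact hmin' i hik ⟨hne, by omega⟩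
      have hklt : k < n := by
        rcases eq_or_lt_of_le hkn with he | h
        · exfalso
          apply hkne
          rw [he, hFn, G_ge t ht le_rfl]
        · exact h
      refine ⟨k, Nat.zero_le _, hkn, fun i _ hik => (hmin i hik).symm,
        fun h => hkne h.symm, ?_⟩
      rcases Nat.eq_zero_or_pos k with hk0 | hkpos
      · subst hk0
        refine Or.inl ⟨rfl, ?_⟩
        rcases lemTk hS hn t ht 0 (Nat.zero_le n) (F 0)
            (hF.1 0 le_rfl (Nat.zero_le n)) with he | hlt
        · exact absurd he hkne
        · exact hlt
      · obtain ⟨k', rfl⟩ : ∃ k', k = k' + 1 := ⟨k - 1, by omega⟩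
        refine Or.inr (Or.inl ⟨hkpos, ?_, ?_⟩)
        · simpa using sgn_G hS t ht k'
        · simp only [Nat.add_sub_cancel]
          have hb := hF.2 k' (Nat.zero_le _) (by omega)
          rw [hmin k' (by omega)] at hb
          rcases hb with hγ | hδ
          · refine Or.inr (Or.inr ⟨⟨?_, (G_succ t ht (by omega : k' < n)).symm⟩, hγ, ?_⟩)
            · rw [dim_G t ht (by omega : k' + 1 ≤ n)]; omega
            · rcases lemTk hS hn t ht (k' + 1) (by omega) (F (k' + 1))
                  (hF.1 (k' + 1) (Nat.zero_le _) (by omega)) with he | hlt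
              · exact absurd he hkne
              · exact hlt
          · exact absurd hδ (lemA hS hn t ht k' (F (k' + 1)))
  -- Part 4: the δ-flag is greatest
  · intro F hF hFn
    by_cases hall : ∀ i, i ≤ n → F i = if i = 0 then t0 else gammaIter S i t
    · exact Or.inl fun i _ hi => hall i hi
    · right
      push_neg at hall
      obtain ⟨i0, hi0n, hi0⟩ := hall
      have hex : ∃ k, F k ≠ (if k = 0 then t0 else gammaIter S k t) ∧ k ≤ n :=
        ⟨i0, hi0, hi0n⟩
      obtain ⟨k, ⟨hkne, hkn⟩, hmin'⟩ :
          ∃ k, (F k ≠ (if k = 0 then t0 else gammaIter S k t) ∧ k ≤ n) ∧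
            ∀ i, i < k → ¬(F i ≠ (if i = 0 then t0 else gammaIter S i t) ∧ i ≤ n) :=
        ⟨Nat.find hex, Nat.find_spec hex, fun i h => Nat.find_min hex h⟩
      have hmin : ∀ i, i < k → F i = if i = 0 then t0 else gammaIter S i t := by
        intro i hik
        by_contra hne
        exact hmin' i hik ⟨hne, by omega⟩
      have hklt : k < n := by
        rcases eq_or_lt_of_le hkn with he | h
        · exfalso
          apply hkne
          rw [he, hFn, if_neg (by omega : n ≠ 0), G_ge t ht le_rfl]
        · exact h
      refine ⟨k, Nat.zero_le _, hkn, fun i _ hik => hmin i hik, hkne, ?_⟩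
      by_cases hk0 : k = 0
      · subst hk0
        refine Or.inl ⟨rfl, ?_⟩
        have hne0 : F 0 ≠ t0 := by simpa using hkne
        simp only [if_pos rfl]
        rcases lemT0 hS hn t ht t0 ht0 (F 0) (hF.1 0 le_rfl (Nat.zero_le n)) with he | hlt
        · exact absurd he.symm hne0
        · exact hlt
      by_cases hk1 : k = 1
      · subst hk1
        have hF0 : F 0 = t0 := by
          have := hmin 0 (by omega)
          simpa using this
        have hne1 : F 1 ≠ gammaIter S 1 t := by simpa using hkne
        refine Or.inr (Or.inl ⟨one_pos, rfl, ?_⟩)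
        simp only [show (1 : ℕ) - 1 = 0 from rfl, if_neg one_ne_zero]
        rw [hF0]
        refine Or.inr (Or.inl ⟨?_, ht0, ?_⟩)
        · have hb := hF.2 0 le_rfl (by omega)
          rw [hF0] at hb
          rcases hb with hγ | hδ
          · exact absurd hγ.2 (lemA0 hS hn t ht t0 ht0 (F 1)
              (hF.1 1 (Nat.zero_le _) (by omega)))
          · exact hδ
        · rcases lemTk hS hn t ht 1 hn1 (F 1)
              (hF.1 1 (Nat.zero_le _) (by omega)) with he | hlt
          · exact absurd he hne1
          · exact hlt
      · obtain ⟨k', rfl⟩ : ∃ k', k = k' + 1 := ⟨k - 1, by omega⟩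
        have hk'1 : 1 ≤ k' := by omega
        have hnek : F (k' + 1) ≠ gammaIter S (k' + 1) t := by simpa using hkne
        have hsgn : ∀ j, 1 ≤ j → j < k' + 1 → sgnSeg S 0 F j = -1 := by
          intro j hj
          induction j, hj using Nat.le_induction with
          | base =>
            intro hjk
            have e0 : F 0 = t0 := by
              have := hmin 0 (by omega)
              simpa using this
            have e1 : F 1 = gammaIter S 1 t := by
              have := hmin 1 (by omega)
              simpa using this
            rw [sgnSeg, if_pos ⟨le_rfl, by rw [e0, e1]; exact ht0⟩]
            norm_num [sgnSeg]
          | succ j hj ih =>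
            intro hjk
            have ej : F j = gammaIter S j t := by
              have := hmin j (by omega)
              rw [this, if_neg (by omega : j ≠ 0)]
            have ej1 : F (j + 1) = gammaIter S (j + 1) t := by
              have := hmin (j + 1) (by omega)
              rw [this, if_neg (by omega : j + 1 ≠ 0)]
            rw [sgnSeg, if_neg, ih (by omega)]
            rintro ⟨-, h⟩
            rw [ej, ej1] at h
            exact not_inDelta_G_succ hS t ht j h
        refine Or.inr (Or.inr ⟨by omega, by simpa using hsgn k' hk'1 (by omega), ?_⟩)
        simp only [Nat.add_sub_cancel, if_neg (by omega : k' + 1 ≠ 0)]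
        have eFk' : F k' = gammaIter S k' t := by
          have := hmin k' (by omega)
          rw [this, if_neg (by omega : k' ≠ 0)]
        rw [eFk']
        have hb := hF.2 k' (Nat.zero_le _) (by omega)
        rw [eFk'] at hb
        rcases hb with hγ | hδ
        · refine Or.inr (Or.inr ⟨⟨?_, (G_succ t ht (by omega : k' < n)).symm⟩, hγ, ?_⟩)
          · rw [dim_G t ht (by omega : k' + 1 ≤ n)]; omega
          · rcases lemTk hS hn t ht (k' + 1) (by omega) (F (k' + 1))
                (hF.1 (k' + 1) (Nat.zero_le _) (by omega)) with he | hlt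
            · exact absurd he hnek
            · exact hlt
        · exact absurd hδ (lemA hS hn t ht k' (F (k' + 1)))
end
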